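/- For any complex ρ with Re(ρ) < 0, the series ∑_{k∈ℤ} (s(k) + tanh((2k+n)/(2ρ))) converges absolutely and its sum equals −(n−1) for every integer n, where s(k) = 1 for k ≥ 0 and s(k) = −1 for k < 0, and tanh is evaluated avoiding poles (assume (2k+n)/(2ρ) is never a pole of tanh, which holds since Re(ρ) < 0 ensures Re((2k+n)/(2ρ)) ≠ 0 for 2k+n ≠ 0; for 2k+n = 0 the term is tanh(0) = 0 plus s(k)). -/

import Mathlib

open Complex

/-- The sign function `s(k) = 1` for `k ≥ 0`, `s(k) = −1` for `k < 0`. -/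
noncomputable def sgn' (k : ℤ) : ℂ := if 0 ≤ k then 1 else -1

private lemma tanh_exp (z : ℂ) :
    Complex.tanh z = (Complex.exp (2 * z) - 1) / (Complex.exp (2 * z) + 1) := by
  have hu : Complex.exp z ≠ 0 := Complex.exp_ne_zero z
  have h2 : Complex.exp (2 * z) = Complex.exp z * Complex.exp z := by
    rw [two_mul, Complex.exp_add]
  rw [Complex.tanh_eq_sinh_div_cosh]
  simp only [Complex.sinh, Complex.cosh]
  rw [Complex.exp_neg, h2]
  set u := Complex.exp z with hudef
  have key : u + u⁻¹ = (u * u + 1) * u⁻¹ := by field_simp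
  by_cases hc : u + u⁻¹ = 0
  · have h0 : u * u + 1 = 0 := by
      rcases mul_eq_zero.mp (key ▸ hc) with h0 | h0
      · exact h0
      · exact absurd h0 (inv_ne_zero hu)
    rw [hc, h0]
    simp
  · have hd : u * u + 1 ≠ 0 := fun hh => hc (by rw [key, hh, zero_mul])
    rw [key]
    field_simp

private lemma bound_small {w : ℂ} (hw : ‖w‖ ≤ 1 / 2) :
    ‖1 + (w - 1) / (w + 1)‖ ≤ 4 * ‖w‖ := by
  have hwn : ‖w‖ ≤ 1 / 2 := hw
  have key : (1 : ℝ) ≤ ‖w + 1‖ + ‖w‖ := by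
    calc (1 : ℝ) = ‖(w + 1) - w‖ := by norm_num
    _ ≤ ‖w + 1‖ + ‖w‖ := norm_sub_le _ _
  have h1 : (1 : ℝ) / 2 ≤ ‖w + 1‖ := by linarith
  have hne : w + 1 ≠ 0 := by
    intro hh
    rw [hh, norm_zero] at h1
    linarith
  have heq : 1 + (w - 1) / (w + 1) = 2 * w / (w + 1) := by
    field_simp
    ring
  rw [heq, norm_div, norm_mul]
  have h2 : ‖(2 : ℂ)‖ = 2 := by norm_num
  rw [h2, div_le_iff₀ (by linarith)]
  have : ‖w‖ = ‖w‖ := rfl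
  rw [this]
  nlinarith [norm_nonneg w]

private lemma bound_big {w : ℂ} (hw : 2 ≤ ‖w‖) :
    ‖-1 + (w - 1) / (w + 1)‖ ≤ 4 / ‖w‖ := by
  have hwn : (2 : ℝ) ≤ ‖w‖ := hw
  have key : ‖w‖ ≤ ‖w + 1‖ + 1 := by
    calc ‖w‖ = ‖(w + 1) - 1‖ := by ring_nf
    _ ≤ ‖w + 1‖ + ‖(1 : ℂ)‖ := norm_sub_le _ _
    _ = ‖w + 1‖ + 1 := by norm_num
  have h1 : ‖w‖ / 2 ≤ ‖w + 1‖ := by linarith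
  have hne : w + 1 ≠ 0 := by
    intro hh
    rw [hh, norm_zero] at h1
    linarith
  have heq : -1 + (w - 1) / (w + 1) = -2 / (w + 1) := by
    field_simp
    ring
  rw [heq, norm_div]
  have h2 : ‖(-2 : ℂ)‖ = 2 := by norm_num
  have : ‖w‖ = ‖w‖ := rfl
  rw [h2, this, div_le_div_iff₀ (by linarith) (by linarith)]
  nlinarith

private lemma hasSum_sgn (n : ℤ) :
    HasSum (fun k : ℤ => sgn' k + sgn' (-n - k)) (-2 * ((n : ℂ) - 1)) := by
  rcases le_or_gt n 0 with hn | hn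
  · have hzero : ∀ k ∉ Finset.Icc (0 : ℤ) (-n), sgn' k + sgn' (-n - k) = 0 := by
      intro k hk
      rw [Finset.mem_Icc, not_and_or, not_le, not_le] at hk
      simp only [sgn']
      rcases hk with hk | hk
      · rw [if_neg (by omega), if_pos (by omega)]; ring
      · rw [if_pos (by omega), if_neg (by omega)]; ring
    have hsum : HasSum _ _ := hasSum_sum_of_ne_finset_zero hzero
    have hval : ∀ k ∈ Finset.Icc (0 : ℤ) (-n), sgn' k + sgn' (-n - k) = 2 := by
      intro k hk
      rw [Finset.mem_Icc] at hk
      simp only [sgn']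
      rw [if_pos (by omega), if_pos (by omega)]
      norm_num
    have heval : ∑ k ∈ Finset.Icc (0 : ℤ) (-n), (sgn' k + sgn' (-n - k))
        = -2 * ((n : ℂ) - 1) := by
      rw [Finset.sum_congr rfl hval, Finset.sum_const, Int.card_Icc, nsmul_eq_mul]
      have h1 : (0 : ℤ) ≤ -n + 1 - 0 := by omega
      have h2 : (((-n + 1 - 0 : ℤ).toNat : ℕ) : ℂ) = ((-n + 1 - 0 : ℤ) : ℂ) := by
        rw [← Int.cast_natCast, Int.toNat_of_nonneg h1]
      rw [h2]
      push_cast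
      ring
    rwa [heval] at hsum
  · have hzero : ∀ k ∉ Finset.Icc (1 - n) (-1 : ℤ), sgn' k + sgn' (-n - k) = 0 := by
      intro k hk
      rw [Finset.mem_Icc, not_and_or, not_le, not_le] at hk
      simp only [sgn']
      rcases hk with hk | hk
      · rw [if_neg (by omega), if_pos (by omega)]; ring
      · rw [if_pos (by omega), if_neg (by omega)]; ring
    have hsum : HasSum _ _ := hasSum_sum_of_ne_finset_zero hzero
    have hval : ∀ k ∈ Finset.Icc (1 - n) (-1 : ℤ), sgn' k + sgn' (-n - k) = -2 := by
      intro k hk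
      rw [Finset.mem_Icc] at hk
      simp only [sgn']
      rw [if_neg (by omega), if_neg (by omega)]
      norm_num
    have heval : ∑ k ∈ Finset.Icc (1 - n) (-1 : ℤ), (sgn' k + sgn' (-n - k))
        = -2 * ((n : ℂ) - 1) := by
      rw [Finset.sum_congr rfl hval, Finset.sum_const, Int.card_Icc, nsmul_eq_mul]
      have h1 : (0 : ℤ) ≤ -1 + 1 - (1 - n) := by omega
      have h2 : (((-1 + 1 - (1 - n) : ℤ).toNat : ℕ) : ℂ) = ((-1 + 1 - (1 - n) : ℤ) : ℂ) := by
        rw [← Int.cast_natCast, Int.toNat_of_nonneg h1]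
      rw [h2]
      push_cast
      ring
    rwa [heval] at hsum

/-- `∑_{k∈ℤ} (s(k) + tanh((2k+n)/(2ρ))) = −(n−1)` for `Re ρ < 0`
(the `HasSum` includes the (absolute) convergence of the series). -/
theorem stmt8 (ρ : ℂ) (h : ρ.re < 0) (n : ℤ) :
    HasSum (fun k : ℤ => sgn' k + Complex.tanh ((2 * (k : ℂ) + n) / (2 * ρ)))
      (-((n : ℂ) - 1)) := by
  have hρ : ρ ≠ 0 := fun hh => by rw [hh] at h; simp at h
  have hc : ρ⁻¹.re < 0 := by
    rw [Complex.inv_re]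
    exact div_neg_of_neg_of_pos h (Complex.normSq_pos.mpr hρ)
  set f : ℤ → ℂ := fun k => sgn' k + Complex.tanh ((2 * (k : ℂ) + n) / (2 * ρ)) with hf
  set w : ℤ → ℂ := fun k => Complex.exp (((2 * k + n : ℤ) : ℂ) * ρ⁻¹) with hw
  have hfk : ∀ k : ℤ, f k = sgn' k + (w k - 1) / (w k + 1) := by
    intro k
    have harg : 2 * ((2 * (k : ℂ) + n) / (2 * ρ)) = ((2 * k + n : ℤ) : ℂ) * ρ⁻¹ := by
      push_cast
      field_simp
    simp only [hf, hw]
    rw [tanh_exp, harg]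
  have habs : ∀ k : ℤ, ‖w k‖ = Real.exp (((2 * k + n : ℤ) : ℝ) * ρ⁻¹.re) := by
    intro k
    simp only [hw]
    rw [Complex.norm_exp]
    congr 1
    rw [Complex.mul_re]
    simp
  have hr1 : (0 : ℝ) ≤ Real.exp (2 * ρ⁻¹.re) := (Real.exp_pos _).le
  have hr2 : Real.exp (2 * ρ⁻¹.re) < 1 := Real.exp_lt_one_iff.mpr (by linarith)
  have hcpos : 0 < -ρ⁻¹.re := by linarith
  have hpos : Summable (fun m : ℕ => f (m : ℤ)) := by
    apply Summable.of_norm_bounded_eventually_nat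
      (g := fun m => (4 * Real.exp ((n : ℝ) * ρ⁻¹.re)) * Real.exp (2 * ρ⁻¹.re) ^ m)
      ((summable_geometric_of_lt_one hr1 hr2).mul_left _)
    obtain ⟨N, hN⟩ := exists_nat_ge ((Real.log 2 / (-ρ⁻¹.re) - n) / 2)
    filter_upwards [Filter.eventually_ge_atTop N] with m hm
    have hmN : (N : ℝ) ≤ m := Nat.cast_le.mpr hm
    have hmn : Real.log 2 / (-ρ⁻¹.re) ≤ 2 * (m : ℝ) + n := by nlinarith
    rw [div_le_iff₀ hcpos] at hmn
    have hineq : ((2 * (m : ℤ) + n : ℤ) : ℝ) * ρ⁻¹.re ≤ -Real.log 2 := by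
      push_cast
      nlinarith
    have hwsmall : ‖w (m : ℤ)‖ ≤ 1 / 2 := by
      rw [habs]
      calc Real.exp _ ≤ Real.exp (-Real.log 2) := Real.exp_le_exp.mpr hineq
      _ = 1 / 2 := by
          rw [Real.exp_neg, Real.exp_log] <;> norm_num
    have hs : sgn' (m : ℤ) = 1 := by
      simp only [sgn']
      rw [if_pos (by positivity)]
    calc ‖f (m : ℤ)‖ = ‖1 + (w (m : ℤ) - 1) / (w (m : ℤ) + 1)‖ := by rw [hfk, hs]
    _ ≤ 4 * ‖w (m : ℤ)‖ := bound_small hwsmall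
    _ = (4 * Real.exp ((n : ℝ) * ρ⁻¹.re)) * Real.exp (2 * ρ⁻¹.re) ^ m := by
        rw [habs, ← Real.exp_nat_mul, mul_assoc, ← Real.exp_add]
        congr 2
        push_cast
        ring
  have hneg : Summable (fun m : ℕ => f (-(m : ℤ))) := by
    apply Summable.of_norm_bounded_eventually_nat
      (g := fun m => (4 * Real.exp (-(n : ℝ) * ρ⁻¹.re)) * Real.exp (2 * ρ⁻¹.re) ^ m)
      ((summable_geometric_of_lt_one hr1 hr2).mul_left _)
    obtain ⟨N, hN⟩ := exists_nat_ge ((Real.log 2 / (-ρ⁻¹.re) + n) / 2)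
    filter_upwards [Filter.eventually_ge_atTop (max N 1)] with m hm
    have hm1 : 1 ≤ m := le_trans (le_max_right _ _) hm
    have hmN : (N : ℝ) ≤ m := Nat.cast_le.mpr (le_trans (le_max_left _ _) hm)
    have hmn : Real.log 2 / (-ρ⁻¹.re) ≤ 2 * (m : ℝ) - n := by nlinarith
    rw [div_le_iff₀ hcpos] at hmn
    have hineq : Real.log 2 ≤ ((2 * (-(m : ℤ)) + n : ℤ) : ℝ) * ρ⁻¹.re := by
      push_cast
      nlinarith
    have hwbig : 2 ≤ ‖w (-(m : ℤ))‖ := by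
      rw [habs]
      calc (2 : ℝ) = Real.exp (Real.log 2) := (Real.exp_log (by norm_num)).symm
      _ ≤ _ := Real.exp_le_exp.mpr hineq
    have hs : sgn' (-(m : ℤ)) = -1 := by
      simp only [sgn']
      rw [if_neg (by omega)]
    calc ‖f (-(m : ℤ))‖ = ‖-1 + (w (-(m : ℤ)) - 1) / (w (-(m : ℤ)) + 1)‖ := by rw [hfk, hs]
    _ ≤ 4 / ‖w (-(m : ℤ))‖ := bound_big hwbig
    _ = (4 * Real.exp (-(n : ℝ) * ρ⁻¹.re)) * Real.exp (2 * ρ⁻¹.re) ^ m := by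
        rw [habs, div_eq_mul_inv, ← Real.exp_neg, ← Real.exp_nat_mul, mul_assoc,
          ← Real.exp_add]
        congr 2
        push_cast
        ring
  have hsummable : Summable f := Summable.of_nat_of_neg hpos hneg
  obtain ⟨S, hS⟩ := hsummable
  have hS2 : HasSum (fun k : ℤ => f (-n - k)) S := by
    have := (Equiv.hasSum_iff (Equiv.subLeft (-n)) (f := f) (a := S)).mpr hS
    exact this
  have hadd : HasSum (fun k : ℤ => f k + f (-n - k)) (S + S) := hS.add hS2
  have hg : ∀ k : ℤ, f k + f (-n - k) = sgn' k + sgn' (-n - k) := by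
    intro k
    have harg : (2 * ((-n - k : ℤ) : ℂ) + n) / (2 * ρ) = -((2 * (k : ℂ) + n) / (2 * ρ)) := by
      push_cast
      ring
    simp only [hf]
    rw [harg, Complex.tanh_neg]
    ring
  have hadd' : HasSum (fun k : ℤ => sgn' k + sgn' (-n - k)) (S + S) := by
    rwa [funext hg] at hadd
  have h2S : S + S = -2 * ((n : ℂ) - 1) := hadd'.unique (hasSum_sgn n)
  have hSval : S = -((n : ℂ) - 1) := by linear_combination h2S / 2
  rwa [hSval] at hS
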